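/- For every Y ∈ End_F(V) commuting with X and every j ∈ J, one has Y(V_j^j) ⊆ Ker(X^j); and the F-linear map sending such a Y to the tuple (Y|_{V_j^j})_{j∈J} is a bijection from the centralizer {Y ∈ End_F(V) : Y ∘ X = X ∘ Y} onto the product ∏_{j∈J} Hom_F(V_j^j, Ker(X^j)). -/

import Mathlib

/-- Index type of the standard basis `e(i,j,k)`: triples `(i,j,k)` with
`1 ≤ i ≤ j ≤ r`, `1 ≤ k ≤ d j` (so in particular `d j ≠ 0`, i.e. `j ∈ J`). -/
def RIdx (r : ℕ) (d : ℕ → ℕ) : Type :=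
  {x : ℕ × ℕ × ℕ //
    1 ≤ x.1 ∧ x.1 ≤ x.2.1 ∧ x.2.1 ≤ r ∧ 1 ≤ x.2.2 ∧ x.2.2 ≤ d x.2.1}

/-- The subspace `V_j^i`, spanned by the basis vectors `e(i,j,k)`, `1 ≤ k ≤ d j`. -/
def Vsub {F : Type*} [Field F] {V : Type*} [AddCommGroup V] [Module F V]
    (r : ℕ) (d : ℕ → ℕ) (e : Module.Basis (RIdx r d) F V) (i j : ℕ) : Submodule F V :=
  Submodule.span F {v | ∃ x : RIdx r d, x.val.1 = i ∧ x.val.2.1 = j ∧ v = e x}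

namespace Stmt10Aux

variable {r : ℕ} {d : ℕ → ℕ}

/-- The "top" index `(j,j,k)` above `x = (i,j,k)`. -/
def topIdx (x : RIdx r d) : RIdx r d :=
  ⟨(x.val.2.1, x.val.2.1, x.val.2.2),
    le_trans x.prop.1 x.prop.2.1, le_refl _, x.prop.2.2⟩

/-- The index `j ∈ J` associated to `x = (i,j,k)`. -/
def jSub (x : RIdx r d) : {j : ℕ // j ∈ Finset.Icc 1 r ∧ d j ≠ 0} :=
  ⟨x.val.2.1,
    Finset.mem_Icc.mpr ⟨le_trans x.prop.1 x.prop.2.1, x.prop.2.2.1⟩,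
    by have h1 := x.prop.2.2.2.1; have h2 := x.prop.2.2.2.2; omega⟩

variable {F : Type*} [Field F] {V : Type*} [AddCommGroup V] [Module F V]

lemma mem_top (e : Module.Basis (RIdx r d) F V) (x : RIdx r d) :
    e (topIdx x) ∈ Vsub r d e x.val.2.1 x.val.2.1 :=
  Submodule.subset_span ⟨topIdx x, rfl, rfl, rfl⟩

lemma Xpow_step (e : Module.Basis (RIdx r d) F V) (X : Module.End F V)
    (hXs : ∀ x y : RIdx r d, x.val.1 = y.val.1 + 1 → x.val.2 = y.val.2 →
      X (e x) = e y) (m : ℕ) :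
    ∀ x y : RIdx r d, x.val.1 = y.val.1 + m → x.val.2 = y.val.2 →
      (X ^ m) (e x) = e y := by
  induction m with
  | zero =>
    intro x y h1 h2
    have hxy : x = y := Subtype.ext (Prod.ext h1 h2)
    rw [hxy, pow_zero, Module.End.one_apply]
  | succ m ih =>
    intro x y h1 h2
    have hy1 : 1 ≤ y.val.1 := y.prop.1
    have hx : y.val.1 + m ≤ x.val.2.1 := by have := x.prop.2.1; omega
    let z : RIdx r d := ⟨(y.val.1 + m, x.val.2.1, x.val.2.2),
      by omega, hx, x.prop.2.2⟩
    have hz1 : z.val.1 = y.val.1 + m := rfl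
    have hz2 : z.val.2 = x.val.2 := rfl
    have h3 : X (e x) = e z := hXs x z (by rw [hz1]; omega) hz2.symm
    rw [pow_succ, Module.End.mul_apply, h3]
    exact ih z y hz1 (hz2.trans h2)

lemma Xpow_kill (e : Module.Basis (RIdx r d) F V) (X : Module.End F V)
    (hX0 : ∀ x : RIdx r d, x.val.1 = 1 → X (e x) = 0)
    (hXs : ∀ x y : RIdx r d, x.val.1 = y.val.1 + 1 → x.val.2 = y.val.2 →
      X (e x) = e y) (x : RIdx r d) :
    (X ^ x.val.1) (e x) = 0 := by
  have hi : 1 ≤ x.val.1 := x.prop.1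
  let y : RIdx r d := ⟨(1, x.val.2.1, x.val.2.2),
    le_refl _, le_trans x.prop.1 x.prop.2.1, x.prop.2.2⟩
  have h1 : (X ^ (x.val.1 - 1)) (e x) = e y :=
    Xpow_step e X hXs _ x y (by show x.val.1 = 1 + (x.val.1 - 1); omega) rfl
  rw [show x.val.1 = (x.val.1 - 1) + 1 from by omega, pow_succ',
    Module.End.mul_apply, h1, hX0 y rfl]

/-- The assigned image of the top vector over `x`. -/
noncomputable def wmap (e : Module.Basis (RIdx r d) F V) (X : Module.End F V)
    (φ : (j : {j : ℕ // j ∈ Finset.Icc 1 r ∧ d j ≠ 0}) →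
      (↥(Vsub r d e (j : ℕ) (j : ℕ)) →ₗ[F] ↥(LinearMap.ker (X ^ (j : ℕ)))))
    (x : RIdx r d) : V :=
  ↑(φ (jSub x) ⟨e (topIdx x), mem_top e x⟩)

lemma wmap_ker (e : Module.Basis (RIdx r d) F V) (X : Module.End F V)
    (φ : (j : {j : ℕ // j ∈ Finset.Icc 1 r ∧ d j ≠ 0}) →
      (↥(Vsub r d e (j : ℕ) (j : ℕ)) →ₗ[F] ↥(LinearMap.ker (X ^ (j : ℕ)))))
    (x : RIdx r d) :
    (X ^ x.val.2.1) (wmap e X φ x) = 0 :=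
  LinearMap.mem_ker.mp (φ (jSub x) ⟨e (topIdx x), mem_top e x⟩).prop

/-- The candidate commuting endomorphism built from the tuple `φ`. -/
noncomputable def Ymap (e : Module.Basis (RIdx r d) F V) (X : Module.End F V)
    (φ : (j : {j : ℕ // j ∈ Finset.Icc 1 r ∧ d j ≠ 0}) →
      (↥(Vsub r d e (j : ℕ) (j : ℕ)) →ₗ[F] ↥(LinearMap.ker (X ^ (j : ℕ))))) :
    Module.End F V :=
  e.constr F fun x => (X ^ (x.val.2.1 - x.val.1)) (wmap e X φ x)

lemma Ymap_basis (e : Module.Basis (RIdx r d) F V) (X : Module.End F V)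
    (φ : (j : {j : ℕ // j ∈ Finset.Icc 1 r ∧ d j ≠ 0}) →
      (↥(Vsub r d e (j : ℕ) (j : ℕ)) →ₗ[F] ↥(LinearMap.ker (X ^ (j : ℕ)))))
    (x : RIdx r d) :
    Ymap e X φ (e x) = (X ^ (x.val.2.1 - x.val.1)) (wmap e X φ x) :=
  Module.Basis.constr_basis e F _ x

lemma phi_congr {A B : Submodule F V} (f : ↥A →ₗ[F] ↥B) {u v : V}
    (hu : u ∈ A) (hv : v ∈ A) (h : u = v) :
    (↑(f ⟨u, hu⟩) : V) = ↑(f ⟨v, hv⟩) := by subst h; rfl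

end Stmt10Aux

open Stmt10Aux in
/-- every `Y` commuting with `X` maps `V_j^j` into `Ker(X^j)` for all
`j ∈ J`; and `Y ↦ (Y|_{V_j^j})_{j∈J}` is a bijection from the centralizer of `X` in
`End_F(V)` onto `∏_{j∈J} Hom_F(V_j^j, Ker(X^j))` (stated as: every tuple of maps
`V_j^j →ₗ Ker(X^j)` is the family of restrictions of a unique `Y` commuting with `X`). -/
theorem stmt_10 (r : ℕ) (hr : 1 ≤ r) (d : ℕ → ℕ) (hd : 1 ≤ d r)
    (F : Type*) [Field F] [CharZero F] (V : Type*) [AddCommGroup V] [Module F V]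
    (e : Module.Basis (RIdx r d) F V) (X : Module.End F V)
    (hX0 : ∀ x : RIdx r d, x.val.1 = 1 → X (e x) = 0)
    (hXs : ∀ x y : RIdx r d, x.val.1 = y.val.1 + 1 → x.val.2 = y.val.2 →
      X (e x) = e y) :
    (∀ Y : Module.End F V, Y ∘ₗ X = X ∘ₗ Y →
      ∀ j, j ∈ Finset.Icc 1 r → d j ≠ 0 →
        ∀ v ∈ Vsub r d e j j, Y v ∈ LinearMap.ker (X ^ j)) ∧
    (∀ φ : (j : {j : ℕ // j ∈ Finset.Icc 1 r ∧ d j ≠ 0}) →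
        (↥(Vsub r d e (j : ℕ) (j : ℕ)) →ₗ[F] ↥(LinearMap.ker (X ^ (j : ℕ)))),
      ∃! Y : Module.End F V, Y ∘ₗ X = X ∘ₗ Y ∧
        ∀ (j : {j : ℕ // j ∈ Finset.Icc 1 r ∧ d j ≠ 0})
          (v : ↥(Vsub r d e (j : ℕ) (j : ℕ))),
          Y (v : V) = ((φ j v : ↥(LinearMap.ker (X ^ (j : ℕ)))) : V)) := by
  constructor
  · -- Part 1
    intro Y hY j hj hdj v hv
    have hcm : Commute Y X := LinearMap.ext fun u => LinearMap.congr_fun hY u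
    have hv0 : (X ^ j) v = 0 := by
      induction hv using Submodule.span_induction with
      | mem u hu =>
        obtain ⟨x, hx1, hx2, rfl⟩ := hu
        rw [← hx1]
        exact Xpow_kill e X hX0 hXs x
      | zero => simp
      | add u w hu hw h1 h2 => rw [map_add, h1, h2, add_zero]
      | smul a u hu h => rw [map_smul, h, smul_zero]
    rw [LinearMap.mem_ker]
    have h2 : (X ^ j) (Y v) = Y ((X ^ j) v) :=
      (LinearMap.congr_fun (hcm.pow_right j) v).symm
    rw [h2, hv0, map_zero]
  · -- Part 2
    intro φ
    have hYe := Ymap_basis e X φ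
    -- commutation
    have hcomm : Ymap e X φ ∘ₗ X = X ∘ₗ Ymap e X φ := by
      apply e.ext
      intro x
      simp only [LinearMap.comp_apply]
      by_cases h1 : x.val.1 = 1
      · rw [hX0 x h1, map_zero, hYe x]
        symm
        rw [← Module.End.mul_apply, ← pow_succ',
          show x.val.2.1 - x.val.1 + 1 = x.val.2.1 from by
            have := x.prop.1; have := x.prop.2.1; omega]
        exact wmap_ker e X φ x
      · have hi2 : 2 ≤ x.val.1 := by have := x.prop.1; omega
        let x' : RIdx r d := ⟨(x.val.1 - 1, x.val.2),
          by show 1 ≤ x.val.1 - 1; omega,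
          by show x.val.1 - 1 ≤ x.val.2.1; have := x.prop.2.1; omega,
          x.prop.2.2⟩
        have hxx' : X (e x) = e x' :=
          hXs x x' (by show x.val.1 = x.val.1 - 1 + 1; omega) rfl
        rw [hxx', hYe x', hYe x]
        show (X ^ (x.val.2.1 - (x.val.1 - 1))) (wmap e X φ x)
          = X ((X ^ (x.val.2.1 - x.val.1)) (wmap e X φ x))
        rw [show x.val.2.1 - (x.val.1 - 1) = (x.val.2.1 - x.val.1) + 1 from by
            have := x.prop.2.1; omega,
          pow_succ', Module.End.mul_apply]
    -- restriction property
    have hres : ∀ (j : {j : ℕ // j ∈ Finset.Icc 1 r ∧ d j ≠ 0})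
        (v : ↥(Vsub r d e (j : ℕ) (j : ℕ))),
        Ymap e X φ (v : V) = ((φ j v : ↥(LinearMap.ker (X ^ (j : ℕ)))) : V) := by
      intro j v
      obtain ⟨v, hv⟩ := v
      induction hv using Submodule.span_induction with
      | mem u hu =>
        obtain ⟨x, hx1, hx2, rfl⟩ := hu
        have hjx : jSub x = j := Subtype.ext hx2
        subst hjx
        rw [hYe x, show x.val.2.1 - x.val.1 = 0 from by omega, pow_zero,
          Module.End.one_apply]
        show (↑(φ (jSub x) ⟨e (topIdx x), mem_top e x⟩) : V) = _
        have hxtop : topIdx x = x := by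
          apply Subtype.ext
          show (x.val.2.1, x.val.2.1, x.val.2.2) = x.val
          have h12 : x.val.2.1 = x.val.1 := by omega
          exact Prod.ext h12 rfl
        exact phi_congr (φ (jSub x)) _ _ (congrArg e hxtop)
      | zero =>
        show Ymap e X φ 0 = (↑(φ j 0) : V)
        rw [map_zero, map_zero]
        rfl
      | add u w hu hw h1 h2 =>
        show Ymap e X φ (u + w)
          = (↑(φ j ((⟨u, hu⟩ : ↥(Vsub r d e (j : ℕ) (j : ℕ)))
              + (⟨w, hw⟩ : ↥(Vsub r d e (j : ℕ) (j : ℕ))))) : V)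
        rw [map_add, map_add, Submodule.coe_add, h1, h2]
      | smul a u hu h =>
        show Ymap e X φ (a • u)
          = (↑(φ j (a • (⟨u, hu⟩ : ↥(Vsub r d e (j : ℕ) (j : ℕ))))) : V)
        rw [map_smul, map_smul, Submodule.coe_smul, h]
    refine ⟨Ymap e X φ, ⟨hcomm, hres⟩, ?_⟩
    rintro Y' ⟨hc', hres'⟩
    apply e.ext
    intro x
    have hcm' : Commute Y' X := LinearMap.ext fun u => LinearMap.congr_fun hc' u
    have htop : (X ^ (x.val.2.1 - x.val.1)) (e (topIdx x)) = e x :=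
      Xpow_step e X hXs _ (topIdx x) x
        (by show x.val.2.1 = x.val.1 + (x.val.2.1 - x.val.1)
            have := x.prop.2.1; omega) rfl
    calc Y' (e x) = Y' ((X ^ (x.val.2.1 - x.val.1)) (e (topIdx x))) := by
          rw [htop]
      _ = (X ^ (x.val.2.1 - x.val.1)) (Y' (e (topIdx x))) :=
          LinearMap.congr_fun (hcm'.pow_right (x.val.2.1 - x.val.1)) (e (topIdx x))
      _ = (X ^ (x.val.2.1 - x.val.1)) (wmap e X φ x) := by
          rw [hres' (jSub x) ⟨e (topIdx x), mem_top e x⟩]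
          rfl
      _ = Ymap e X φ (e x) := (hYe x).symm
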